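/- Let M be a d×n integer matrix of rank r all of whose r×r minors lie in {-1,0,1} (a unimodular matrix), and let L = M·Mᵀ. If S ⊆ {1,…,d} indexes a set of r linearly independent columns of L, then the subgroup of ℤ^d generated by the columns {L_i : i ∈ S} equals the subgroup of ℤ^d generated by all the columns of L. Consequently, for any two subsets S, T ⊆ {1,…,d} each indexing r linearly independent columns of L, the r-dimensional Hausdorff measures of the parallelepipeds Z(L_S) and Z(L_T) are equal (so the zonotope Z(L) decomposes into top-dimensional parallelepipeds all of the same volume). -/

import Mathlib

open MeasureTheory

/-- The zonotope generated by a `d × k` real matrix, viewed inside Euclidean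
space `ℝ^d` (so that Hausdorff measures are taken w.r.t. the Euclidean
metric): the image of the unit cube `[0,1]^k` under `x ↦ M x`. -/
def zonotopeE {d k : ℕ} (M : Matrix (Fin d) (Fin k) ℝ) : Set (EuclideanSpace ℝ (Fin d)) :=
  {y | ∃ x : Fin k → ℝ, (∀ i, x i ∈ Set.Icc (0 : ℝ) 1) ∧
    y = (WithLp.equiv 2 (Fin d → ℝ)).symm (M.mulVec x)}

open Module Set Function

/-- det of a square matrix with integer entries whose columns are linearly independent and whose
minors are in {-1,0,1}: helper to express any column `j` of `L` as an integer combination of the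
columns indexed by `f`. -/
lemma key_lemma (d n r : ℕ) (M : Matrix (Fin d) (Fin n) ℝ)
    (hint : ∀ i j, ∃ z : ℤ, M i j = (z : ℝ))
    (hrank : M.rank = r)
    (huni : ∀ (f : Fin r → Fin d) (g : Fin r → Fin n),
      Function.Injective f → Function.Injective g →
      (M.submatrix f g).det ∈ ({-1, 0, 1} : Set ℝ))
    (L : Matrix (Fin d) (Fin d) ℝ) (hLdef : L = M * M.transpose)
    (f : Fin r → Fin d) (hfinj : Function.Injective f)
    (hfind : LinearIndependent ℝ (fun i : Fin r => fun k => L k (f i))) :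
    ∀ j : Fin d, ∃ z : Fin r → ℤ,
      (fun k => L k j) = ∑ i, (z i : ℝ) • (fun k => L k (f i)) := by
  classical
  -- columns of L are M applied to rows of M
  have hcol : ∀ j : Fin d, (fun k => L k j) = M.mulVecLin (M j) := by
    intro j
    funext k
    simp [hLdef, Matrix.mul_apply, Matrix.mulVecLin_apply, Matrix.mulVec, dotProduct,
      Matrix.transpose_apply]
  -- rows of M indexed by f are linearly independent
  have hrow_ind : LinearIndependent ℝ (fun i : Fin r => M (f i)) := by
    apply LinearIndependent.of_comp M.mulVecLin
    have : (⇑M.mulVecLin ∘ fun i : Fin r => M (f i)) = fun i : Fin r => fun k => L k (f i) := by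
      funext i; exact (hcol (f i)).symm
    rw [this]; exact hfind
  -- rows of M indexed by f span the row space
  have hrowspan : ∀ j : Fin d, M j ∈ Submodule.span ℝ (Set.range fun i : Fin r => M (f i)) := by
    intro j
    have hle : Submodule.span ℝ (Set.range fun i : Fin r => M (f i)) ≤
        Submodule.span ℝ (Set.range M) := by
      apply Submodule.span_mono
      rintro x ⟨i, rfl⟩; exact ⟨f i, rfl⟩
    have h1 : finrank ℝ (Submodule.span ℝ (Set.range fun i : Fin r => M (f i))) = r := by
      rw [finrank_span_eq_card hrow_ind, Fintype.card_fin]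
    have h2 : finrank ℝ (Submodule.span ℝ (Set.range M)) = r := by
      have := Matrix.range_mulVecLin M.transpose
      rw [Matrix.col, Matrix.transpose_transpose] at this
      rw [← this]
      have : Matrix.rank M.transpose = r := by rw [Matrix.rank_transpose, hrank]
      exact this
    have : Submodule.span ℝ (Set.range fun i : Fin r => M (f i)) =
        Submodule.span ℝ (Set.range M) :=
      Submodule.eq_of_le_of_finrank_le hle (by rw [h1, h2])
    rw [this]
    exact Submodule.subset_span ⟨j, rfl⟩
  intro j
  obtain ⟨a, ha⟩ := Submodule.mem_span_range_iff_exists_fun ℝ |>.1 (hrowspan j)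
  -- find a good column selection g
  set N : Matrix (Fin r) (Fin n) ℝ := M.submatrix f id with hN
  have hspanN : Submodule.span ℝ (Set.range N.transpose) = ⊤ := by
    apply Submodule.eq_top_of_finrank_eq
    have h1 : finrank ℝ (Submodule.span ℝ (Set.range N.transpose)) = N.rank := by
      rw [Matrix.rank_eq_finrank_span_cols]; rfl
    have h2 : N.rank = r := by
      rw [← Matrix.rank_transpose]
      show finrank ℝ (LinearMap.range N.transpose.mulVecLin) = r
      rw [Matrix.range_mulVecLin, Matrix.col, Matrix.transpose_transpose]
      have : Set.range N = Set.range fun i : Fin r => M (f i) := by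
        congr 1
      rw [this, finrank_span_eq_card hrow_ind, Fintype.card_fin]
    rw [h1, h2]
    simp [finrank_fintype_fun_eq_card]
  obtain ⟨t, hts, htsp, htind⟩ := exists_linearIndependent ℝ (Set.range N.transpose)
  rw [hspanN] at htsp
  haveI : Fintype t := ((Set.finite_range N.transpose).subset hts).fintype
  let b : Basis t ℝ (Fin r → ℝ) := Basis.mk htind (by rw [Subtype.range_coe, htsp])
  have hcardt : Fintype.card t = r := by
    have := Module.finrank_eq_card_basis b
    rw [finrank_fintype_fun_eq_card, Fintype.card_fin] at this
    omega
  let eqv : Fin r ≃ t := (Fintype.equivFinOfCardEq hcardt).symm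
  have hmemrange : ∀ i : Fin r, ((eqv i : Fin r → ℝ)) ∈ Set.range N.transpose := fun i =>
    hts (eqv i).2
  let g : Fin r → Fin n := fun i => (hmemrange i).choose
  have hg : ∀ i, N.transpose (g i) = (eqv i : Fin r → ℝ) := fun i => (hmemrange i).choose_spec
  have hginj : Function.Injective g := by
    intro i i' h
    have : (eqv i : Fin r → ℝ) = (eqv i' : Fin r → ℝ) := by rw [← hg, ← hg, h]
    exact eqv.injective (Subtype.ext this)
  set A : Matrix (Fin r) (Fin r) ℝ := M.submatrix f g with hA
  -- A has linearly independent columns hence unit det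
  have hAcols : LinearIndependent ℝ (fun i : Fin r => A.transpose i) := by
    have : (fun i : Fin r => A.transpose i) = (fun x : t => (x : Fin r → ℝ)) ∘ eqv := by
      funext i
      have := hg i
      funext k
      calc A.transpose i k = N.transpose (g i) k := rfl
        _ = (eqv i : Fin r → ℝ) k := by rw [this]
    rw [this]
    exact htind.comp _ eqv.injective
  have hAdet : A.det ≠ 0 := by
    intro h0
    have : ¬ LinearIndependent ℝ (fun i : Fin r => A.transpose i) := by
      rw [show (fun i : Fin r => A.transpose i) = Matrix.row A.transpose from rfl,
        Matrix.linearIndependent_rows_iff_isUnit]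
      rw [Matrix.isUnit_iff_isUnit_det, Matrix.det_transpose, h0]
      exact not_isUnit_zero
    exact this hAcols
  -- determinant of A is ±1
  have hdet1 : A.det = 1 ∨ A.det = -1 := by
    have := huni f g hfinj hginj
    simp only [Set.mem_insert_iff, Set.mem_singleton_iff] at this
    rcases this with h | h | h
    · right; exact h
    · exact absurd h hAdet
    · left; exact h
  -- integer model of M
  choose Z hZ using hint
  set Az : Matrix (Fin r) (Fin r) ℤ := (Matrix.of Z).submatrix f g with hAz
  have hAmap : A = Az.map (fun z : ℤ => (z : ℝ)) := by
    ext i i'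
    simp [hA, hAz, hZ, Matrix.map_apply, Matrix.submatrix_apply]
  have hdetmap : (Az.det : ℝ) = A.det := by
    rw [hAmap]
    exact RingHom.map_det (Int.castRingHom ℝ) Az
  have hAzdet : IsUnit Az.det := by
    rw [Int.isUnit_iff]
    rcases hdet1 with h | h
    · left; apply Int.cast_injective (α := ℝ); rw [hdetmap, h]; norm_num
    · right; apply Int.cast_injective (α := ℝ); rw [hdetmap, h]; norm_num
  set B : Matrix (Fin r) (Fin r) ℤ := Az⁻¹ with hB
  have hAB : Az * B = 1 := Matrix.mul_nonsing_inv Az hAzdet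
  have hABr : A * B.map (fun z : ℤ => (z : ℝ)) = 1 := by
    have h1 : ((Az * B).map (fun z : ℤ => (z : ℝ)) : Matrix (Fin r) (Fin r) ℝ) =
        Az.map (fun z : ℤ => (z : ℝ)) * B.map (fun z : ℤ => (z : ℝ)) :=
      Matrix.map_mul (f := Int.castRingHom ℝ)
    rw [← hAmap] at h1
    rw [← h1, hAB]
    ext i i'
    by_cases h : i = i' <;> simp [Matrix.map_apply, Matrix.one_apply, h]
  -- express a via B
  have hveq : Matrix.vecMul a A = fun i' => M j (g i') := by
    funext i'
    have := congrFun ha (g i')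
    simpa [Matrix.vecMul, dotProduct, Finset.sum_apply, hA,
      Matrix.submatrix_apply, mul_comm] using this
  have haeq : a = Matrix.vecMul (fun i' => M j (g i')) (B.map (fun z : ℤ => (z : ℝ))) := by
    rw [← hveq, Matrix.vecMul_vecMul, hABr, Matrix.vecMul_one]
  refine ⟨fun i => ∑ i', Z j (g i') * B i' i, ?_⟩
  have haint : ∀ i, a i = ((∑ i', Z j (g i') * B i' i : ℤ) : ℝ) := by
    intro i
    rw [haeq]
    simp only [Matrix.vecMul, dotProduct, Matrix.map_apply]
    push_cast
    congr 1
    funext i'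
    rw [hZ]
  rw [hcol j, ← ha, map_sum]
  congr 1
  funext i
  rw [_root_.map_smul, ← hcol (f i), ← haint i]

/-- For a rank `r` unimodular integer matrix `M` with `L = M Mᵀ`: any `r`
linearly independent columns of `L` generate the same subgroup of `ℤ^d` as all
the columns of `L`; consequently any two parallelepipeds spanned by `r`
linearly independent columns of `L` have the same `r`-dimensional Hausdorff
measure (so `Z(L)` decomposes into top-dimensional parallelepipeds all of the
same volume). -/
theorem stmt11 (d n r : ℕ) (M : Matrix (Fin d) (Fin n) ℝ)
    (hint : ∀ i j, ∃ z : ℤ, M i j = (z : ℝ))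
    (hrank : M.rank = r)
    (huni : ∀ (f : Fin r → Fin d) (g : Fin r → Fin n),
      Function.Injective f → Function.Injective g →
      (M.submatrix f g).det ∈ ({-1, 0, 1} : Set ℝ))
    (L : Matrix (Fin d) (Fin d) ℝ) (hLdef : L = M * M.transpose)
    (S : Finset (Fin d)) (hScard : S.card = r)
    (hSind : LinearIndependent ℝ (fun j : S => fun i => L i j))
    (T : Finset (Fin d)) (hTcard : T.card = r)
    (hTind : LinearIndependent ℝ (fun j : T => fun i => L i j)) :
    AddSubgroup.closure ((fun j => fun i => L i j) '' (S : Set (Fin d))) =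
      AddSubgroup.closure (Set.range (fun j => fun i => L i j)) ∧
    μH[(r : ℝ)] (zonotopeE (L.submatrix id (S.orderEmbOfFin hScard))) =
      μH[(r : ℝ)] (zonotopeE (L.submatrix id (T.orderEmbOfFin hTcard))) := by
  classical
  set fS : Fin r → Fin d := ⇑(S.orderEmbOfFin hScard) with hfS
  set fT : Fin r → Fin d := ⇑(T.orderEmbOfFin hTcard) with hfT
  -- `Fin r`-indexed linear independence
  have hSind' : LinearIndependent ℝ (fun i : Fin r => fun k => L k (fS i)) := by
    have hinj : Function.Injective
        (fun i : Fin r => (⟨fS i, S.orderEmbOfFin_mem hScard i⟩ : S)) := fun i i' h =>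
      (S.orderEmbOfFin hScard).injective (congrArg Subtype.val h)
    exact hSind.comp _ hinj
  have hTind' : LinearIndependent ℝ (fun i : Fin r => fun k => L k (fT i)) := by
    have hinj : Function.Injective
        (fun i : Fin r => (⟨fT i, T.orderEmbOfFin_mem hTcard i⟩ : T)) := fun i i' h =>
      (T.orderEmbOfFin hTcard).injective (congrArg Subtype.val h)
    exact hTind.comp _ hinj
  have keyS := key_lemma d n r M hint hrank huni L hLdef fS (S.orderEmbOfFin hScard).injective
    hSind'
  have keyT := key_lemma d n r M hint hrank huni L hLdef fT (T.orderEmbOfFin hTcard).injective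
    hTind'
  constructor
  · -- the subgroup statement
    apply le_antisymm
    · exact AddSubgroup.closure_mono (Set.image_subset_range _ _)
    · rw [AddSubgroup.closure_le]
      rintro x ⟨j, rfl⟩
      obtain ⟨z, hz⟩ := keyS j
      show (fun k => L k j) ∈ _
      rw [hz]
      apply AddSubgroup.sum_mem
      intro i _
      rw [Int.cast_smul_eq_zsmul]
      refine AddSubgroup.zsmul_mem _ (AddSubgroup.subset_closure ?_) _
      exact ⟨fS i, Finset.orderEmbOfFin_mem S hScard i, rfl⟩
  · -- the measure statement
    -- change of basis matrices
    choose zT hzT using fun i' => keyS (fT i')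
    choose zS hzS using fun i' => keyT (fS i')
    set U : Matrix (Fin r) (Fin r) ℝ := Matrix.of fun i i' => ((zT i' i : ℤ) : ℝ) with hU
    set V : Matrix (Fin r) (Fin r) ℝ := Matrix.of fun i i' => ((zS i' i : ℤ) : ℝ) with hV
    have hLT : L.submatrix id fT = L.submatrix id fS * U := by
      ext k i'
      have h := congrFun (hzT i') k
      simp only [Finset.sum_apply, Pi.smul_apply, smul_eq_mul] at h
      simp only [Matrix.submatrix_apply, id_eq, Matrix.mul_apply, hU, Matrix.of_apply]
      rw [h]
      exact Finset.sum_congr rfl fun i _ => mul_comm _ _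
    have hLS : L.submatrix id fS = L.submatrix id fT * V := by
      ext k i'
      have h := congrFun (hzS i') k
      simp only [Finset.sum_apply, Pi.smul_apply, smul_eq_mul] at h
      simp only [Matrix.submatrix_apply, id_eq, Matrix.mul_apply, hV, Matrix.of_apply]
      rw [h]
      exact Finset.sum_congr rfl fun i _ => mul_comm _ _
    -- mulVec of L_S as a sum of columns
    have hmvS : ∀ v : Fin r → ℝ, (L.submatrix id fS).mulVec v
        = ∑ i, v i • (fun k => L k (fS i)) := by
      intro v
      funext k
      simp only [Matrix.mulVec, dotProduct, Matrix.submatrix_apply, id_eq,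
        Finset.sum_apply, Pi.smul_apply, smul_eq_mul]
      exact Finset.sum_congr rfl fun i _ => mul_comm _ _
    have hSker : ∀ v : Fin r → ℝ, (L.submatrix id fS).mulVec v = 0 → v = 0 := by
      intro v hv
      rw [hmvS] at hv
      funext i
      exact Fintype.linearIndependent_iff.1 hSind' v hv i
    have hUV : U * V = 1 := by
      have h1 : L.submatrix id fS * (U * V) = L.submatrix id fS := by
        rw [← Matrix.mul_assoc, ← hLT, ← hLS]
      ext i i'
      have h2 : (L.submatrix id fS).mulVec ((U * V).mulVec (Pi.single i' 1) - Pi.single i' 1)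
          = 0 := by
        rw [Matrix.mulVec_sub, Matrix.mulVec_mulVec, h1, sub_self]
      have h3 := congrFun (hSker _ h2) i
      simp only [Pi.sub_apply, Pi.zero_apply, sub_eq_zero] at h3
      rw [Matrix.mulVec_single_one] at h3
      change (U * V) i i' = _ at h3
      rw [h3]
      by_cases hii : i = i' <;> simp [Matrix.one_apply, Pi.single_apply, hii]
    -- |det U| = 1
    have hdetU : |U.det| = 1 := by
      set Uz : Matrix (Fin r) (Fin r) ℤ := Matrix.of fun i i' => zT i' i with hUz
      set Vz : Matrix (Fin r) (Fin r) ℤ := Matrix.of fun i i' => zS i' i with hVz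
      have hUmap : U = Uz.map (fun z : ℤ => (z : ℝ)) := rfl
      have hVmap : V = Vz.map (fun z : ℤ => (z : ℝ)) := rfl
      have hu : (Uz.det : ℝ) = U.det := by
        rw [hUmap]; exact RingHom.map_det (Int.castRingHom ℝ) Uz
      have hv : (Vz.det : ℝ) = V.det := by
        rw [hVmap]; exact RingHom.map_det (Int.castRingHom ℝ) Vz
      have hmul : Uz.det * Vz.det = 1 := by
        have : U.det * V.det = 1 := by rw [← Matrix.det_mul, hUV, Matrix.det_one]
        apply Int.cast_injective (α := ℝ)
        push_cast
        exact this
      rcases Int.mul_eq_one_iff_eq_one_or_neg_one.1 hmul with ⟨h, _⟩ | ⟨h, _⟩ <;>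
        · rw [← hu, h]
          norm_num
    -- the ambient r-dimensional subspace E
    set lsymm : (Fin d → ℝ) →ₗ[ℝ] EuclideanSpace ℝ (Fin d) :=
      (WithLp.linearEquiv 2 ℝ (Fin d → ℝ)).symm.toLinearMap with hlsymm
    set colE : Fin r → EuclideanSpace ℝ (Fin d) := fun i => lsymm (fun k => L k (fS i)) with hcolE
    set E : Submodule ℝ (EuclideanSpace ℝ (Fin d)) := Submodule.span ℝ (Set.range colE) with hE
    have hEind : LinearIndependent ℝ colE := by
      have h := hSind'.map' lsymm (by rw [hlsymm]; exact LinearEquiv.ker _)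
      exact h
    have hfinE : finrank ℝ E = r := by
      rw [hE, finrank_span_eq_card hEind, Fintype.card_fin]
    set obS : OrthonormalBasis (Fin r) ℝ E := (stdOrthonormalBasis ℝ E).reindex (finCongr hfinE)
      with hobS
    set eS := obS.repr with heS
    set ι := (Submodule.subtypeₗᵢ E).comp eS.symm.toLinearIsometry with hι
    have hιe : ∀ w : E, ι (eS w) = (w : EuclideanSpace ℝ (Fin d)) := by
      intro w
      rw [hι]
      simp only [LinearIsometry.coe_comp, Function.comp_apply,
        LinearIsometryEquiv.coe_toLinearIsometry, LinearIsometryEquiv.symm_apply_apply]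
      rfl
    have hmemS : ∀ x : Fin r → ℝ, lsymm ((L.submatrix id fS).mulVec x) ∈ E := by
      intro x
      rw [hmvS, map_sum]
      apply Submodule.sum_mem
      intro i _
      rw [_root_.map_smul]
      exact Submodule.smul_mem _ _ (Submodule.subset_span ⟨i, rfl⟩)
    have hmemT : ∀ x : Fin r → ℝ, lsymm ((L.submatrix id fT).mulVec x) ∈ E := by
      intro x
      rw [hLT, ← Matrix.mulVec_mulVec]
      exact hmemS _
    set ℓr := WithLp.linearEquiv 2 ℝ (Fin r → ℝ) with hℓr
    set AW := fun (W : Matrix (Fin d) (Fin r) ℝ) (h : ∀ x, lsymm (W.mulVec x) ∈ E) =>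
      (eS.toLinearEquiv.toLinearMap.comp
        ((LinearMap.codRestrict E (lsymm.comp W.mulVecLin) h).comp ℓr.toLinearMap)
        : EuclideanSpace ℝ (Fin r) →ₗ[ℝ] EuclideanSpace ℝ (Fin r)) with hAW
    have hAPP : ∀ (W : Matrix (Fin d) (Fin r) ℝ) (h : ∀ x, lsymm (W.mulVec x) ∈ E)
        (x : EuclideanSpace ℝ (Fin r)),
        AW W h x = eS ⟨lsymm (W.mulVec (ℓr x)), h (ℓr x)⟩ := by
      intro W h x
      rfl
    set cube : Set (EuclideanSpace ℝ (Fin r)) := {x | ∀ i, x i ∈ Set.Icc (0:ℝ) 1} with hcube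
    have hzono : ∀ (W : Matrix (Fin d) (Fin r) ℝ) (h : ∀ x, lsymm (W.mulVec x) ∈ E),
        zonotopeE W = ⇑ι '' (AW W h '' cube) := by
      intro W h
      ext y
      simp only [zonotopeE, Set.mem_setOf_eq, Set.mem_image]
      constructor
      · rintro ⟨x, hx, rfl⟩
        refine ⟨AW W h (ℓr.symm x), ⟨ℓr.symm x, fun i => hx i, rfl⟩, ?_⟩
        have hx2 : AW W h (ℓr.symm x) = eS ⟨lsymm (W.mulVec x), h x⟩ := by
          rw [hAPP]
          exact congrArg eS (Subtype.ext (by rw [ℓr.apply_symm_apply]))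
        rw [hx2, hιe]
        rfl
      · rintro ⟨_, ⟨x', hx', rfl⟩, rfl⟩
        refine ⟨ℓr x', fun i => hx' i, ?_⟩
        rw [hAPP, hιe]
        rfl
    haveI hHaar : (μH[(r:ℝ)] : Measure (EuclideanSpace ℝ (Fin r))).IsAddHaarMeasure := by
      have h := MeasureTheory.isAddHaarMeasure_hausdorffMeasure (E := EuclideanSpace ℝ (Fin r))
      rw [finrank_euclideanSpace_fin] at h
      exact h
    set Umap : EuclideanSpace ℝ (Fin r) →ₗ[ℝ] EuclideanSpace ℝ (Fin r) :=
      ℓr.symm.toLinearMap.comp ((Matrix.toLin' U).comp ℓr.toLinearMap) with hUmapdef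
    have hUmapapp : ∀ x : EuclideanSpace ℝ (Fin r), Umap x = ℓr.symm (U.mulVec (ℓr x)) :=
      fun x => rfl
    have hATc : ⇑(AW (L.submatrix id fT) hmemT) = ⇑(AW (L.submatrix id fS) hmemS) ∘ ⇑Umap := by
      funext x
      simp only [Function.comp_apply]
      rw [hAPP, hAPP]
      refine congrArg eS (Subtype.ext ?_)
      show lsymm ((L.submatrix id fT).mulVec (ℓr x))
        = lsymm ((L.submatrix id fS).mulVec (ℓr (Umap x)))
      rw [hUmapapp, ℓr.apply_symm_apply, hLT, Matrix.mulVec_mulVec]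
    have hdetUmap : LinearMap.det Umap = U.det := by
      have h1 := LinearMap.det_conj (Matrix.toLin' U) ℓr.symm
      rw [LinearEquiv.symm_symm] at h1
      have h2 : Umap = (ℓr.symm : (Fin r → ℝ) ≃ₗ[ℝ] EuclideanSpace ℝ (Fin r)).toLinearMap
          ∘ₗ (Matrix.toLin' U) ∘ₗ (ℓr : EuclideanSpace ℝ (Fin r) ≃ₗ[ℝ] (Fin r → ℝ)).toLinearMap
          := rfl
      rw [h2]
      rw [show ((ℓr : EuclideanSpace ℝ (Fin r) ≃ₗ[ℝ] (Fin r → ℝ)) : EuclideanSpace ℝ (Fin r) →ₗ[ℝ] (Fin r → ℝ)) = ((ℓr.symm.symm : EuclideanSpace ℝ (Fin r) ≃ₗ[ℝ] (Fin r → ℝ)) : EuclideanSpace ℝ (Fin r) →ₗ[ℝ] (Fin r → ℝ)) by rw [LinearEquiv.symm_symm]]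
      rw [LinearMap.det_conj (Matrix.toLin' U) ℓr.symm]
      exact LinearMap.det_toLin' U
    have hrnn : (0:ℝ) ≤ (r:ℝ) := Nat.cast_nonneg r
    have hiso := ι.isometry
    calc μH[(r:ℝ)] (zonotopeE (L.submatrix id fS))
        = μH[(r:ℝ)] (AW (L.submatrix id fS) hmemS '' cube) := by
          rw [hzono _ hmemS, hiso.hausdorffMeasure_image (Or.inl hrnn)]
      _ = ENNReal.ofReal |LinearMap.det (AW (L.submatrix id fS) hmemS)| * μH[(r:ℝ)] cube :=
          Measure.addHaar_image_linearMap _ _ _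
      _ = ENNReal.ofReal |LinearMap.det (AW (L.submatrix id fS) hmemS)| *
            μH[(r:ℝ)] (⇑Umap '' cube) := by
          rw [Measure.addHaar_image_linearMap _ Umap cube, hdetUmap, hdetU, ENNReal.ofReal_one,
            one_mul]
      _ = μH[(r:ℝ)] (AW (L.submatrix id fS) hmemS '' (⇑Umap '' cube)) :=
          (Measure.addHaar_image_linearMap _ _ _).symm
      _ = μH[(r:ℝ)] (AW (L.submatrix id fT) hmemT '' cube) := by
          rw [hATc, Set.image_comp]
      _ = μH[(r:ℝ)] (zonotopeE (L.submatrix id fT)) := by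
          rw [hzono _ hmemT, hiso.hausdorffMeasure_image (Or.inl hrnn)]
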